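/- arXiv:0906.3258 — 8 statements merged into one kernel-verified Lean document; each statement's English description precedes it below -/
import Mathlib

section
/- Let X and C be types, r a positive natural number, L : X → C → C → Matrix (2×2, or r×r over ℂ) a family of matrices L(x; α, λ), and R a family of maps R_{(α₁,α₂)} : X × X → X × X. Assume (strong Lax property): for all α₁, α₂ ∈ C and x₁, x₂, x₁', x₂' ∈ X, R_{(α₁,α₂)}(x₁,x₂) = (x₁',x₂') holds if and only if L(x₂; α₂, λ) · L(x₁; α₁, λ) = L(x₁'; α₁, λ) · L(x₂'; α₂, λ) for all λ ∈ C. Assume further (3-factorization property): for all α₁, α₂, α₃ ∈ C and x₁, x₂, x₃, x₁', x₂', x₃' ∈ X, if L(x₃'; α₃, λ) · L(x₂'; α₂, λ) · L(x₁'; α₁, λ) = L(x₃; α₃, λ) · L(x₂; α₂, λ) · L(x₁; α₁, λ) for all λ ∈ C, then x₁' = x₁, x₂' = x₂, x₃' = x₃. Then the family R satisfies the parametric Yang–Baxter equation: for all α₁, α₂, α₃ ∈ C, R^{(2,3)}_{(α₂,α₃)} ∘ R^{(1,3)}_{(α₁,α₃)} ∘ R^{(1,2)}_{(α₁,α₂)}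 = R^{(1,2)}_{(α₁,α₂)} ∘ R^{(1,3)}_{(α₁,α₃)} ∘ R^{(2,3)}_{(α₂,α₃)} as maps X³ → X³. -/
/-- `R` acting on factors (1,2) of `X³` and as the identity on the third. -/
def act12 {X : Type*} (R : X × X → X × X) : X × X × X → X × X × X :=
  fun p => ((R (p.1, p.2.1)).1, (R (p.1, p.2.1)).2, p.2.2)

/-- `R` acting on factors (1,3) of `X³` and as the identity on the second. -/
def act13 {X : Type*} (R : X × X → X × X) : X × X × X → X × X × X :=
  fun p => ((R (p.1, p.2.2)).1, p.2.1, (R (p.1, p.2.2)).2)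

/-- `R` acting on factors (2,3) of `X³` and as the identity on the first. -/
def act23 {X : Type*} (R : X × X → X × X) : X × X × X → X × X × X :=
  fun p => (p.1, (R (p.2.1, p.2.2)).1, (R (p.2.1, p.2.2)).2)

/-- A parametric family of maps with a strong Lax matrix satisfying the
3-factorization property satisfies the parametric Yang–Baxter equation. -/
theorem yangBaxter_of_strongLax_threeFactorization
    {X C : Type*} (r : ℕ) (hr : 0 < r)
    (L : X → C → C → Matrix (Fin r) (Fin r) ℂ)
    (R : C → C → X × X → X × X)
    (strongLax : ∀ (α₁ α₂ : C) (x₁ x₂ x₁' x₂' : X),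
      R α₁ α₂ (x₁, x₂) = (x₁', x₂') ↔
        ∀ lam : C, L x₂ α₂ lam * L x₁ α₁ lam = L x₁' α₁ lam * L x₂' α₂ lam)
    (threeFact : ∀ (α₁ α₂ α₃ : C) (x₁ x₂ x₃ x₁' x₂' x₃' : X),
      (∀ lam : C,
        L x₃' α₃ lam * L x₂' α₂ lam * L x₁' α₁ lam =
          L x₃ α₃ lam * L x₂ α₂ lam * L x₁ α₁ lam) →
        x₁' = x₁ ∧ x₂' = x₂ ∧ x₃' = x₃) :
    ∀ α₁ α₂ α₃ : C,
      act23 (R α₂ α₃) ∘ act13 (R α₁ α₃) ∘ act12 (R α₁ α₂) =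
        act12 (R α₁ α₂) ∘ act13 (R α₁ α₃) ∘ act23 (R α₂ α₃) := by
  intro α₁ α₂ α₃
  funext p
  obtain ⟨x₁, x₂, x₃⟩ := p
  -- LHS intermediates
  set a := (R α₁ α₂ (x₁, x₂)).1 with ha
  set b := (R α₁ α₂ (x₁, x₂)).2 with hb
  have h1 : R α₁ α₂ (x₁, x₂) = (a, b) := rfl
  set c := (R α₁ α₃ (a, x₃)).1 with hc
  set d := (R α₁ α₃ (a, x₃)).2 with hd
  have h2 : R α₁ α₃ (a, x₃) = (c, d) := rfl
  set e := (R α₂ α₃ (b, d)).1 with he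
  set f := (R α₂ α₃ (b, d)).2 with hf
  have h3 : R α₂ α₃ (b, d) = (e, f) := rfl
  -- RHS intermediates
  set p' := (R α₂ α₃ (x₂, x₃)).1 with hp
  set q := (R α₂ α₃ (x₂, x₃)).2 with hq
  have h4 : R α₂ α₃ (x₂, x₃) = (p', q) := rfl
  set s := (R α₁ α₃ (x₁, q)).1 with hs
  set t := (R α₁ α₃ (x₁, q)).2 with ht
  have h5 : R α₁ α₃ (x₁, q) = (s, t) := rfl
  set u := (R α₁ α₂ (s, p')).1 with hu
  set v := (R α₁ α₂ (s, p')).2 with hv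
  have h6 : R α₁ α₂ (s, p') = (u, v) := rfl
  have e1 := (strongLax α₁ α₂ x₁ x₂ a b).mp h1
  have e2 := (strongLax α₁ α₃ a x₃ c d).mp h2
  have e3 := (strongLax α₂ α₃ b d e f).mp h3
  have e4 := (strongLax α₂ α₃ x₂ x₃ p' q).mp h4
  have e5 := (strongLax α₁ α₃ x₁ q s t).mp h5
  have e6 := (strongLax α₁ α₂ s p' u v).mp h6
  have key : ∀ lam : C,
      L u α₁ lam * L v α₂ lam * L t α₃ lam =
        L c α₁ lam * L e α₂ lam * L f α₃ lam := by
    intro lam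
    have lhs : L c α₁ lam * L e α₂ lam * L f α₃ lam =
        L x₃ α₃ lam * L x₂ α₂ lam * L x₁ α₁ lam := by
      calc L c α₁ lam * L e α₂ lam * L f α₃ lam
          = L c α₁ lam * (L e α₂ lam * L f α₃ lam) := by rw [mul_assoc]
        _ = L c α₁ lam * (L d α₃ lam * L b α₂ lam) := by rw [e3]
        _ = L c α₁ lam * L d α₃ lam * L b α₂ lam := by rw [mul_assoc]
        _ = L x₃ α₃ lam * L a α₁ lam * L b α₂ lam := by rw [e2]
        _ = L x₃ α₃ lam * (L a α₁ lam * L b α₂ lam) := by rw [mul_assoc]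
        _ = L x₃ α₃ lam * (L x₂ α₂ lam * L x₁ α₁ lam) := by rw [e1]
        _ = L x₃ α₃ lam * L x₂ α₂ lam * L x₁ α₁ lam := by rw [mul_assoc]
    have rhs : L u α₁ lam * L v α₂ lam * L t α₃ lam =
        L x₃ α₃ lam * L x₂ α₂ lam * L x₁ α₁ lam := by
      calc L u α₁ lam * L v α₂ lam * L t α₃ lam
          = L p' α₂ lam * L s α₁ lam * L t α₃ lam := by rw [e6]
        _ = L p' α₂ lam * (L s α₁ lam * L t α₃ lam) := by rw [mul_assoc]
        _ = L p' α₂ lam * (L q α₃ lam * L x₁ α₁ lam) := by rw [e5]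
        _ = L p' α₂ lam * L q α₃ lam * L x₁ α₁ lam := by rw [mul_assoc]
        _ = L x₃ α₃ lam * L x₂ α₂ lam * L x₁ α₁ lam := by rw [e4]
    rw [lhs, rhs]
  obtain ⟨hft, hev, hcu⟩ := threeFact α₃ α₂ α₁ t v u f e c (fun lam => (key lam).symm)
  show (c, e, f) = (u, v, t)
  rw [hft, hev, hcu]
end

section
/- Let X and C be types, L : X → C → C → Matrix (r×r over ℂ) a family of matrices L(x; α, λ), and R a family of maps R_{(α₁,α₂)} : X × X → X × X. Assume (strong Lax property): for all α₁, α₂ ∈ C and x₁, x₂, x₁', x₂' ∈ X, R_{(α₁,α₂)}(x₁,x₂) = (x₁',x₂') holds if and only if L(x₂; α₂, λ) · L(x₁; α₁, λ) = L(x₁'; α₁, λ) · L(x₂'; α₂, λ) for all λ ∈ C. Assume further (2-factorization property): for all α₁, α₂ ∈ C and x₁, x₂, x₁', x₂' ∈ X, if L(x₂'; α₂, λ) · L(x₁'; α₁, λ) = L(x₂; α₂, λ) · L(x₁; α₁, λ) for all λ ∈ C, then x₁' = x₁ and x₂' = x₂. Then the family R is unitary: for all α₁, α₂ ∈ C and x₁,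 x₂ ∈ X, if R_{(α₁,α₂)}(x₁,x₂) = (x₁',x₂') and R_{(α₂,α₁)}(x₂',x₁') = (x₂'',x₁''), then (x₁'',x₂'') = (x₁,x₂). -/
/-- A parametric family of maps with a strong Lax matrix satisfying the
2-factorization property is unitary. -/
theorem unitary_of_strongLax_twoFactorization
    {X C : Type*} (r : ℕ) (hr : 0 < r)
    (L : X → C → C → Matrix (Fin r) (Fin r) ℂ)
    (R : C → C → X × X → X × X)
    (strongLax : ∀ (α₁ α₂ : C) (x₁ x₂ x₁' x₂' : X),
      R α₁ α₂ (x₁, x₂) = (x₁', x₂') ↔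
        ∀ lam : C, L x₂ α₂ lam * L x₁ α₁ lam = L x₁' α₁ lam * L x₂' α₂ lam)
    (twoFact : ∀ (α₁ α₂ : C) (x₁ x₂ x₁' x₂' : X),
      (∀ lam : C,
        L x₂' α₂ lam * L x₁' α₁ lam = L x₂ α₂ lam * L x₁ α₁ lam) →
        x₁' = x₁ ∧ x₂' = x₂) :
    ∀ (α₁ α₂ : C) (x₁ x₂ x₁' x₂' x₁'' x₂'' : X),
      R α₁ α₂ (x₁, x₂) = (x₁', x₂') →
      R α₂ α₁ (x₂', x₁') = (x₂'', x₁'') →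
      (x₁'', x₂'') = (x₁, x₂) := by
  intro α₁ α₂ x₁ x₂ x₁' x₂' x₁'' x₂'' h1 h2
  rw [strongLax] at h1 h2
  have h : ∀ lam : C, L x₂'' α₂ lam * L x₁'' α₁ lam = L x₂ α₂ lam * L x₁ α₁ lam := by
    intro lam
    rw [← (h2 lam), (h1 lam)]
  obtain ⟨e1, e2⟩ := twoFact α₁ α₂ x₁ x₂ x₁'' x₂'' h
  rw [e1, e2]
end

section
/- The Adler map family R_{(a,b)}(u,v) = (v + (a−b)/(u+v), u − (a−b)/(u+v)) on ℂ × ℂ satisfies the parametric Yang–Baxter equation: for all parameters a₁, a₂, a₃ ∈ ℂ and all (x₁, x₂, x₃) ∈ ℂ³ such that every denominator encountered in evaluating both compositions R^{(2,3)}_{(a₂,a₃)} ∘ R^{(1,3)}_{(a₁,a₃)} ∘ R^{(1,2)}_{(a₁,a₂)} and R^{(1,2)}_{(a₁,a₂)} ∘ R^{(1,3)}_{(a₁,a₃)} ∘ R^{(2,3)}_{(a₂,a₃)} at (x₁,x₂,x₃) is nonzero, the two compositions give the same value at (x₁, x₂, x₃). -/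
/-- The Adler map `R_{(a,b)}(u,v) = (v + (a−b)/(u+v), u − (a−b)/(u+v))`. -/
noncomputable def adler (a b : ℂ) : ℂ × ℂ → ℂ × ℂ :=
  fun p => (p.2 + (a - b) / (p.1 + p.2), p.1 - (a - b) / (p.1 + p.2))

/-- The Adler map family satisfies the parametric Yang–Baxter equation wherever
all denominators encountered in both compositions are nonzero. -/
theorem adler_yangBaxter (a₁ a₂ a₃ x₁ x₂ x₃ : ℂ)
    (p1 p2 q1 q2 : ℂ × ℂ × ℂ)
    (hp1 : p1 = act12 (adler a₁ a₂) (x₁, x₂, x₃))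
    (hp2 : p2 = act13 (adler a₁ a₃) p1)
    (hq1 : q1 = act23 (adler a₂ a₃) (x₁, x₂, x₃))
    (hq2 : q2 = act13 (adler a₁ a₃) q1)
    (h1 : x₁ + x₂ ≠ 0)
    (h2 : p1.1 + p1.2.2 ≠ 0)
    (h3 : p2.2.1 + p2.2.2 ≠ 0)
    (h4 : x₂ + x₃ ≠ 0)
    (h5 : q1.1 + q1.2.2 ≠ 0)
    (h6 : q2.1 + q2.2.1 ≠ 0) :
    act23 (adler a₂ a₃) p2 = act12 (adler a₁ a₂) q2 := by
  subst hp1 hp2 hq1 hq2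
  simp only [act12, act13, act23, adler] at h1 h2 h3 h4 h5 h6 ⊢
  have hD1 : (x₂ + x₃) * (x₁ + x₂) + (a₁ - a₂) ≠ 0 := by
    intro h; apply h2; field_simp; linear_combination h
  have hD2 : (x₁ + x₂) * (x₂ + x₃) - (a₂ - a₃) ≠ 0 := by
    intro h; apply h5; field_simp; linear_combination h
  have hD1' : (x₁ + x₂) * (x₂ + x₃) + (a₁ - a₂) ≠ 0 := by rwa [mul_comm]
  have hD2' : (x₂ + x₃) * (x₁ + x₂) - (a₂ - a₃) ≠ 0 := by rwa [mul_comm]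
  have es : x₂ + (a₁ - a₂) / (x₁ + x₂) + x₃
      = ((x₂ + x₃) * (x₁ + x₂) + (a₁ - a₂)) / (x₁ + x₂) := by
    field_simp; ring
  rw [es, div_div_eq_mul_div]
  have eu : x₁ - (a₁ - a₂) / (x₁ + x₂) +
      (x₂ + (a₁ - a₂) / (x₁ + x₂) -
        (a₁ - a₃) * (x₁ + x₂) / ((x₂ + x₃) * (x₁ + x₂) + (a₁ - a₂)))
      = ((x₁ + x₂) * (x₂ + x₃) - (a₂ - a₃)) * (x₁ + x₂)
        / ((x₂ + x₃) * (x₁ + x₂) + (a₁ - a₂)) := by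
    field_simp; ring
  rw [eu, div_div_eq_mul_div]
  have ew : x₁ + (x₂ - (a₂ - a₃) / (x₂ + x₃))
      = ((x₁ + x₂) * (x₂ + x₃) - (a₂ - a₃)) / (x₂ + x₃) := by
    field_simp; ring
  rw [ew, div_div_eq_mul_div]
  have ev : x₂ - (a₂ - a₃) / (x₂ + x₃) +
      (a₁ - a₃) * (x₂ + x₃) / ((x₁ + x₂) * (x₂ + x₃) - (a₂ - a₃)) +
      (x₃ + (a₂ - a₃) / (x₂ + x₃))
      = ((x₂ + x₃) * (x₁ + x₂) + (a₁ - a₂)) * (x₂ + x₃)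
        / ((x₁ + x₂) * (x₂ + x₃) - (a₂ - a₃)) := by
    field_simp; ring
  rw [ev, div_div_eq_mul_div]
  have hA : ((x₂ + x₃) * (x₁ + x₂) + (a₁ - a₂)) * (x₂ + x₃) ≠ 0 := mul_ne_zero hD1 h4
  have hB : ((x₁ + x₂) * (x₂ + x₃) - (a₂ - a₃)) * (x₁ + x₂) ≠ 0 := mul_ne_zero hD2 h1
  refine Prod.ext ?_ (Prod.ext ?_ ?_) <;>
    · simp only []
      field_simp
      ring
end

section
/- The map family R_{(α₁,α₂)}(x,y) = ( y(α₁ + xy)/(α₂ + xy), x(α₂ + xy)/(α₁ + xy) ) on ℂ × ℂ satisfies the parametric Yang–Baxter equation: for all parameters α₁, α₂, α₃ ∈ ℂ and all (x₁, x₂, x₃) ∈ ℂ³ such that every denominator encountered in evaluating both compositions R^{(2,3)}_{(α₂,α₃)} ∘ R^{(1,3)}_{(α₁,α₃)} ∘ R^{(1,2)}_{(α₁,α₂)} and R^{(1,2)}_{(α₁,α₂)} ∘ R^{(1,3)}_{(α₁,α₃)} ∘ R^{(2,3)}_{(α₂,α₃)} at (x₁,x₂,x₃) is nonzero, the two compositions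 give the same value at (x₁, x₂, x₃). -/
/-- The map `R_{(α₁,α₂)}(x,y) = ( y(α₁+xy)/(α₂+xy), x(α₂+xy)/(α₁+xy) )`. -/
noncomputable def fIII (α₁ α₂ : ℂ) : ℂ × ℂ → ℂ × ℂ :=
  fun p => (p.2 * (α₁ + p.1 * p.2) / (α₂ + p.1 * p.2),
            p.1 * (α₂ + p.1 * p.2) / (α₁ + p.1 * p.2))

/-- The denominators encountered in applying `fIII α₁ α₂` at a point are nonzero. -/
def fIIIok (α₁ α₂ : ℂ) (p : ℂ × ℂ) : Prop :=
  α₁ + p.1 * p.2 ≠ 0 ∧ α₂ + p.1 * p.2 ≠ 0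


lemma myaux (a b d : ℂ) {c : ℂ} (hc : c ≠ 0) : a * (b / c) / (d / c) = a * b / d := by
  rcases eq_or_ne d 0 with h | h
  · simp [h]
  · field_simp

set_option maxHeartbeats 4000000 in
/-- The map family `fIII` satisfies the parametric Yang–Baxter equation wherever
all denominators encountered in both compositions are nonzero. -/
theorem fIII_yangBaxter (α₁ α₂ α₃ x₁ x₂ x₃ : ℂ)
    (p1 p2 q1 q2 : ℂ × ℂ × ℂ)
    (hp1 : p1 = act12 (fIII α₁ α₂) (x₁, x₂, x₃))
    (hp2 : p2 = act13 (fIII α₁ α₃) p1)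
    (hq1 : q1 = act23 (fIII α₂ α₃) (x₁, x₂, x₃))
    (hq2 : q2 = act13 (fIII α₁ α₃) q1)
    (h1 : fIIIok α₁ α₂ (x₁, x₂))
    (h2 : fIIIok α₁ α₃ (p1.1, p1.2.2))
    (h3 : fIIIok α₂ α₃ (p2.2.1, p2.2.2))
    (h4 : fIIIok α₂ α₃ (x₂, x₃))
    (h5 : fIIIok α₁ α₃ (q1.1, q1.2.2))
    (h6 : fIIIok α₁ α₂ (q2.1, q2.2.1)) :
    act23 (fIII α₂ α₃) p2 = act12 (fIII α₁ α₂) q2 := by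
  subst hp1 hp2 hq1 hq2
  simp only [act12, act13, act23, fIII, fIIIok] at h1 h2 h3 h4 h5 h6 ⊢
  obtain ⟨a1, a2⟩ := h1
  obtain ⟨b1, b2⟩ := h2
  obtain ⟨c1, c2⟩ := h3
  obtain ⟨d1, d2⟩ := h4
  obtain ⟨e1, e2⟩ := h5
  obtain ⟨f1, f2⟩ := h6
  have et1 : α₁ + x₂ * (α₁ + x₁ * x₂) / (α₂ + x₁ * x₂) * x₃
      = (α₁*(α₂+x₁*x₂) + x₂*x₃*(α₁+x₁*x₂))/(α₂+x₁*x₂) := by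
    rw [div_mul_eq_mul_div, add_div' _ _ _ a2]; ring
  have et3 : α₃ + x₂ * (α₁ + x₁ * x₂) / (α₂ + x₁ * x₂) * x₃
      = (α₃*(α₂+x₁*x₂) + x₂*x₃*(α₁+x₁*x₂))/(α₂+x₁*x₂) := by
    rw [div_mul_eq_mul_div, add_div' _ _ _ a2]; ring
  have eu1 : α₁ + x₁ * (x₂ * (α₃ + x₂ * x₃) / (α₂ + x₂ * x₃))
      = (α₁*(α₂+x₂*x₃) + x₁*x₂*(α₃+x₂*x₃))/(α₂+x₂*x₃) := by
    field_simp
  have eu3 : α₃ + x₁ * (x₂ * (α₃ + x₂ * x₃) / (α₂ + x₂ * x₃))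
      = (α₃*(α₂+x₂*x₃) + x₁*x₂*(α₃+x₂*x₃))/(α₂+x₂*x₃) := by
    field_simp
  simp only [et1, et3] at b1 b2 c1 c2 ⊢
  simp only [eu1, eu3] at e1 e2 f1 f2 ⊢
  have hT1 : α₁*(α₂+x₁*x₂) + x₂*x₃*(α₁+x₁*x₂) ≠ 0 := fun h => b1 (by rw [h, zero_div])
  have hT3 : α₃*(α₂+x₁*x₂) + x₂*x₃*(α₁+x₁*x₂) ≠ 0 := fun h => b2 (by rw [h, zero_div])
  have hU1 : α₁*(α₂+x₂*x₃) + x₁*x₂*(α₃+x₂*x₃) ≠ 0 := fun h => e1 (by rw [h, zero_div])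
  have hU3 : α₃*(α₂+x₂*x₃) + x₁*x₂*(α₃+x₂*x₃) ≠ 0 := fun h => e2 (by rw [h, zero_div])
  have es2 : α₂ + x₁ * (α₂ + x₁ * x₂) / (α₁ + x₁ * x₂) *
      (x₂ * (α₁ + x₁ * x₂) / (α₂ + x₁ * x₂) * ((α₃ * (α₂ + x₁ * x₂) + x₂ * x₃ * (α₁ + x₁ * x₂)) / (α₂ + x₁ * x₂)) /
        ((α₁ * (α₂ + x₁ * x₂) + x₂ * x₃ * (α₁ + x₁ * x₂)) / (α₂ + x₁ * x₂))) = (α₂ * (α₁ * (α₂ + x₁ * x₂) + x₂ * x₃ * (α₁ + x₁ * x₂)) + x₁ * x₂ * (α₃ * (α₂ + x₁ * x₂) + x₂ * x₃ * (α₁ + x₁ * x₂))) / (α₁ * (α₂ + x₁ * x₂) + x₂ * x₃ * (α₁ + x₁ * x₂)) := by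
    field_simp (discharger := (ring_nf at *; assumption))
  have es3 : α₃ + x₁ * (α₂ + x₁ * x₂) / (α₁ + x₁ * x₂) *
      (x₂ * (α₁ + x₁ * x₂) / (α₂ + x₁ * x₂) * ((α₃ * (α₂ + x₁ * x₂) + x₂ * x₃ * (α₁ + x₁ * x₂)) / (α₂ + x₁ * x₂)) /
        ((α₁ * (α₂ + x₁ * x₂) + x₂ * x₃ * (α₁ + x₁ * x₂)) / (α₂ + x₁ * x₂))) = (α₃ * (α₁ * (α₂ + x₁ * x₂) + x₂ * x₃ * (α₁ + x₁ * x₂)) + x₁ * x₂ * (α₃ * (α₂ + x₁ * x₂) + x₂ * x₃ * (α₁ + x₁ * x₂))) / (α₁ * (α₂ + x₁ * x₂) + x₂ * x₃ * (α₁ + x₁ * x₂)) := by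
    field_simp (discharger := (ring_nf at *; assumption))
  have ew1 : α₁ + x₂ * (α₃ + x₂ * x₃) / (α₂ + x₂ * x₃) * ((α₁ * (α₂ + x₂ * x₃) + x₁ * x₂ * (α₃ + x₂ * x₃)) / (α₂ + x₂ * x₃)) /
        ((α₃ * (α₂ + x₂ * x₃) + x₁ * x₂ * (α₃ + x₂ * x₃)) / (α₂ + x₂ * x₃)) *
      (x₃ * (α₂ + x₂ * x₃) / (α₃ + x₂ * x₃)) = (α₁ * (α₃ * (α₂ + x₂ * x₃) + x₁ * x₂ * (α₃ + x₂ * x₃)) + x₂ * x₃ * (α₁ * (α₂ + x₂ * x₃) + x₁ * x₂ * (α₃ + x₂ * x₃))) / (α₃ * (α₂ + x₂ * x₃) + x₁ * x₂ * (α₃ + x₂ * x₃)) := by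
    field_simp (discharger := (ring_nf at *; assumption))
  have ew2 : α₂ + x₂ * (α₃ + x₂ * x₃) / (α₂ + x₂ * x₃) * ((α₁ * (α₂ + x₂ * x₃) + x₁ * x₂ * (α₃ + x₂ * x₃)) / (α₂ + x₂ * x₃)) /
        ((α₃ * (α₂ + x₂ * x₃) + x₁ * x₂ * (α₃ + x₂ * x₃)) / (α₂ + x₂ * x₃)) *
      (x₃ * (α₂ + x₂ * x₃) / (α₃ + x₂ * x₃)) = (α₂ * (α₃ * (α₂ + x₂ * x₃) + x₁ * x₂ * (α₃ + x₂ * x₃)) + x₂ * x₃ * (α₁ * (α₂ + x₂ * x₃) + x₁ * x₂ * (α₃ + x₂ * x₃))) / (α₃ * (α₂ + x₂ * x₃) + x₁ * x₂ * (α₃ + x₂ * x₃)) := by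
    field_simp (discharger := (ring_nf at *; assumption))
  simp only [es2, es3] at c1 c2 ⊢
  simp only [ew1, ew2] at f1 f2 ⊢
  have hS2 : α₂ * (α₁ * (α₂ + x₁ * x₂) + x₂ * x₃ * (α₁ + x₁ * x₂)) + x₁ * x₂ * (α₃ * (α₂ + x₁ * x₂) + x₂ * x₃ * (α₁ + x₁ * x₂)) ≠ 0 := fun h => c1 (by rw [h, zero_div])
  have hS3 : α₃ * (α₁ * (α₂ + x₁ * x₂) + x₂ * x₃ * (α₁ + x₁ * x₂)) + x₁ * x₂ * (α₃ * (α₂ + x₁ * x₂) + x₂ * x₃ * (α₁ + x₁ * x₂)) ≠ 0 := fun h => c2 (by rw [h, zero_div])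
  have hW1 : α₁ * (α₃ * (α₂ + x₂ * x₃) + x₁ * x₂ * (α₃ + x₂ * x₃)) + x₂ * x₃ * (α₁ * (α₂ + x₂ * x₃) + x₁ * x₂ * (α₃ + x₂ * x₃)) ≠ 0 := fun h => f1 (by rw [h, zero_div])
  have hW2 : α₂ * (α₃ * (α₂ + x₂ * x₃) + x₁ * x₂ * (α₃ + x₂ * x₃)) + x₂ * x₃ * (α₁ * (α₂ + x₂ * x₃) + x₁ * x₂ * (α₃ + x₂ * x₃)) ≠ 0 := fun h => f2 (by rw [h, zero_div])
  simp only [myaux _ _ _ a2, myaux _ _ _ hT1, myaux _ _ _ d1, myaux _ _ _ hU3]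
  refine Prod.ext ?_ (Prod.ext ?_ ?_) <;> simp only
  · field_simp (discharger := (ring_nf at *; assumption))
    ring
  · field_simp (discharger := (ring_nf at *; assumption))
    ring
  · field_simp (discharger := (ring_nf at *; assumption))
    ring
end

section
/- Let α₁, α₂, x₁, x₂ ∈ ℂ with α₁ + x₁x₂ ≠ 0 and α₂ + x₁x₂ ≠ 0, and set x₁' = x₂(α₁ + x₁x₂)/(α₂ + x₁x₂) and x₂' = x₁(α₂ + x₁x₂)/(α₁ + x₁x₂). Then for every λ ∈ ℂ, the 2×2 complex matrices satisfy L(x₂; α₂, λ) · L(x₁; α₁, λ) = L(x₁'; α₁, λ) · L(x₂'; α₂, λ), where L(x; α, λ) is the 2×2 matrix with rows (x², λx) and (x, α). -/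
/-- The Lax matrix `L(x; α, λ)` with rows `(x², λx)` and `(x, α)`. -/
noncomputable def laxF (x α lam : ℂ) : Matrix (Fin 2) (Fin 2) ℂ :=
  !![x ^ 2, lam * x; x, α]

/-- The Yang–Baxter map `(x₁,x₂) ↦ (x₂(α₁+x₁x₂)/(α₂+x₁x₂), x₁(α₂+x₁x₂)/(α₁+x₁x₂))`
satisfies the Lax factorization `L(x₂;α₂,λ)L(x₁;α₁,λ) = L(x₁';α₁,λ)L(x₂';α₂,λ)`
for every spectral parameter `λ`. -/
theorem laxF_factorization (α₁ α₂ x₁ x₂ : ℂ)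
    (h₁ : α₁ + x₁ * x₂ ≠ 0) (h₂ : α₂ + x₁ * x₂ ≠ 0)
    (x₁' x₂' : ℂ)
    (hx₁' : x₁' = x₂ * (α₁ + x₁ * x₂) / (α₂ + x₁ * x₂))
    (hx₂' : x₂' = x₁ * (α₂ + x₁ * x₂) / (α₁ + x₁ * x₂)) :
    ∀ lam : ℂ,
      laxF x₂ α₂ lam * laxF x₁ α₁ lam = laxF x₁' α₁ lam * laxF x₂' α₂ lam := by
  intro lam
  subst hx₁' hx₂'
  unfold laxF
  ext i j
  fin_cases i <;> fin_cases j <;>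
    simp [Matrix.mul_apply, Fin.sum_univ_two] <;>
    field_simp [show α₁ + x₂ * x₁ ≠ 0 by rwa [mul_comm], show α₂ + x₂ * x₁ ≠ 0 by rwa [mul_comm]] <;> ring
end

section
/- Let α₁, α₂ ∈ ℂ and x₁, x₂, x₁', x₂' ∈ ℂ with x₁ ≠ 0 and α₂ + x₁x₂ ≠ 0. If for every λ ∈ ℂ the 2×2 complex matrices satisfy L(x₂'; α₂, λ) · L(x₁'; α₁, λ) = L(x₂; α₂, λ) · L(x₁; α₁, λ), where L(x; α, λ) is the 2×2 matrix with rows (x², λx) and (x, α), then x₁' = x₁ and x₂' = x₂ (the 2-factorization property of the Lax matrix L). -/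
/-- The 2-factorization property of the Lax matrix `laxF`: equality of the products
for all values of the spectral parameter forces `x₁' = x₁` and `x₂' = x₂`. -/
theorem laxF_twoFactorization (α₁ α₂ x₁ x₂ x₁' x₂' : ℂ)
    (hx₁ : x₁ ≠ 0) (h : α₂ + x₁ * x₂ ≠ 0)
    (hfact : ∀ lam : ℂ,
      laxF x₂' α₂ lam * laxF x₁' α₁ lam = laxF x₂ α₂ lam * laxF x₁ α₁ lam) :
    x₁' = x₁ ∧ x₂' = x₂ := by
  have e11 := congrFun (congrFun (hfact 1) 1) 1
  have e10 := congrFun (congrFun (hfact 0) 1) 0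
  simp [laxF, Matrix.mul_apply, Fin.sum_univ_two] at e11 e10
  have hx1 : x₁' = x₁ := by
    have key : (α₂ + x₁ * x₂) * x₁' = (α₂ + x₁ * x₂) * x₁ := by
      linear_combination e10 - x₁' * e11
    exact mul_left_cancel₀ h key
  rw [hx1] at e11
  exact ⟨hx1, mul_right_cancel₀ hx₁ e11⟩
end

section
/- The discrete Krichever–Novikov Yang–Baxter map is unitary: for every k ∈ ℂ, all points 𝐚 = (a,A), 𝐛 = (b,B) on the Jacobi quartic E_k = {(a,A) ∈ ℂ² : A² = a⁴ + k a² + 1}, and all (x,X), (y,Y) ∈ ℂ² such that all denominators encountered are nonzero, writing R_{(𝐚,𝐛)}((x,X),(y,Y)) = ((p,P),(q,Q)) with p = F(y,x,Y;𝐚,𝐛), P = Y, q = x, Q = F(X,x,Y;𝐚,𝐛), one has R_{(𝐛,𝐚)}((q,Q),(p,P)) = ((y,Y),(x,X)); equivalently F(p, q, P; 𝐛, 𝐚) = y and F(Q, q, P; 𝐛, 𝐚) = X. -/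
/-- Membership in the Jacobi quartic `E_k = {(a,A) : A² = a⁴ + k a² + 1}`. -/
def onJacobi (k : ℂ) (a : ℂ × ℂ) : Prop :=
  a.2 ^ 2 = a.1 ^ 4 + k * a.1 ^ 2 + 1

/-- The denominator of `F(x,y,z;𝐚,𝐛)` for the Krichever–Novikov map. -/
def denKN (x y z : ℂ) (a b : ℂ × ℂ) : ℂ :=
  (a.1 * b.2 - b.1 * a.2) * (a.1 * b.1 * y * z - 1) * x +
    (1 - a.1 ^ 2 * b.1 ^ 2) * (a.1 * z - b.1 * y)

/-- The function `F(x,y,z;𝐚,𝐛)` for the Krichever–Novikov map. -/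
noncomputable def Fkn (x y z : ℂ) (a b : ℂ × ℂ) : ℂ :=
  ((1 - a.1 ^ 2 * b.1 ^ 2) * (b.1 * z - a.1 * y) * x +
      (a.1 * b.2 - b.1 * a.2) * (y * z - a.1 * b.1)) / denKN x y z a b

/-- The discrete Krichever–Novikov Yang–Baxter map
`R_{(𝐚,𝐛)}((x,X),(y,Y)) = ((F(y,x,Y;𝐚,𝐛), Y), (x, F(X,x,Y;𝐚,𝐛)))`. -/
noncomputable def Rkn (a b : ℂ × ℂ) : (ℂ × ℂ) × (ℂ × ℂ) → (ℂ × ℂ) × (ℂ × ℂ) :=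
  fun uv => ((Fkn uv.2.1 uv.1.1 uv.2.2 a b, uv.2.2),
             (uv.1.1, Fkn uv.1.2 uv.1.1 uv.2.2 a b))

lemma Fkn_inv (v x Y : ℂ) (a b : ℂ × ℂ)
    (h1 : denKN v x Y a b ≠ 0)
    (h3 : denKN (Fkn v x Y a b) x Y b a ≠ 0) :
    Fkn (Fkn v x Y a b) x Y b a = v := by
  rw [Fkn, div_eq_iff h3]
  rw [Fkn, denKN] at h3 ⊢
  rw [denKN] at h1 ⊢
  simp only [mul_div_assoc', div_add' _ _ _ h1]
  rw [div_eq_div_iff h1 h1]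
  ring

/-- The discrete Krichever–Novikov Yang–Baxter map is unitary:
`R_{(𝐛,𝐚)}((q,Q),(p,P)) = ((y,Y),(x,X))`. -/
theorem Rkn_unitary (k : ℂ) (a b : ℂ × ℂ)
    (ha : onJacobi k a) (hb : onJacobi k b)
    (x X y Y p P q Q : ℂ)
    (hp : p = Fkn y x Y a b) (hP : P = Y) (hq : q = x) (hQ : Q = Fkn X x Y a b)
    (h1 : denKN y x Y a b ≠ 0) (h2 : denKN X x Y a b ≠ 0)
    (h3 : denKN p q P b a ≠ 0) (h4 : denKN Q q P b a ≠ 0) :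
    Rkn b a ((q, Q), (p, P)) = ((y, Y), (x, X)) := by
  subst hp; subst hP; subst hQ; subst hq
  simp only [Rkn, Prod.mk.injEq]
  exact ⟨⟨Fkn_inv _ _ _ a b h1 h3, trivial⟩, trivial, Fkn_inv _ _ _ a b h2 h4⟩
end

section
/- The discrete Landau–Lifshits Yang–Baxter map is unitary: for all α, β ∈ ℂ, all points 𝐚 = (a,A), 𝐛 = (b,B) on the Weierstrass curve E = {(χ,𝒳) ∈ ℂ² : 𝒳² + χ³ + αχ + β = 0} with a, b ≠ 0 and a ≠ b, and all (x,X), (y,Y) ∈ ℂ² such that every denominator encountered is nonzero, writing R_{(𝐚,𝐛)}((x,X),(y,Y)) = ((p,P),(q,Q)) with p = F₁(y,x,Y;𝐚,𝐛), P = Y, q = x, Q = F₂(X,x,Y;𝐚,𝐛), one has R_{(𝐛,𝐚)}((q,Q),(p,P)) = ((y,Y),(x,X)); equivalently F₁(p, q, P; 𝐛, 𝐚) = y and F₂(Q, q, P; 𝐛, 𝐚) = X. -/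
set_option linter.unusedVariables false

/-- Membership in the Weierstrass curve `E = {(χ,𝒳) : 𝒳² + χ³ + αχ + β = 0}`. -/
def onW (α β : ℂ) (p : ℂ × ℂ) : Prop :=
  p.2 ^ 2 + p.1 ^ 3 + α * p.1 + β = 0

/-- `s_m = B·a^{m−1} + A·b^{m−1}` for `𝐚 = (a,A)`, `𝐛 = (b,B)`. -/
noncomputable def sLL (a b : ℂ × ℂ) (m : ℕ) : ℂ :=
  b.2 * a.1 ^ ((m : ℤ) - 1) + a.2 * b.1 ^ ((m : ℤ) - 1)

/-- `K(y,z) − N(y,z)`. -/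
noncomputable def diffLL (α β : ℂ) (a b : ℂ × ℂ) (y z : ℂ) : ℂ :=
  2 * sLL a b 2 * y * z - (α * sLL a b 1 + sLL a b 3) * (y - z)
    - 2 * α * sLL a b 2 - 4 * β * sLL a b 1

/-- `K(y,z) + N(y,z)`. -/
noncomputable def sumLL (α β : ℂ) (a b : ℂ × ℂ) (y z : ℂ) : ℂ :=
  (y + z) * (a.1 * b.1 * (α * sLL a b 0 + 3 * sLL a b 2)
    + 4 * β * sLL a b 1 + 3 * α * sLL a b 2 + sLL a b 4) / (a.1 - b.1)

/-- `K(y,z)`. -/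
noncomputable def Kll (α β : ℂ) (a b : ℂ × ℂ) (y z : ℂ) : ℂ :=
  (sumLL α β a b y z + diffLL α β a b y z) / 2

/-- `N(y,z)`. -/
noncomputable def Nll (α β : ℂ) (a b : ℂ × ℂ) (y z : ℂ) : ℂ :=
  (sumLL α β a b y z - diffLL α β a b y z) / 2

/-- `L(y,z)`. -/
noncomputable def Lll (α β : ℂ) (a b : ℂ × ℂ) (y z : ℂ) : ℂ :=
  sLL a b 3 * y * z + (α * sLL a b 2 + 2 * β * sLL a b 1) * (y - z)
    + 4 * β * sLL a b 2 - α ^ 2 * sLL a b 1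

/-- `M(y,z)`. -/
noncomputable def Mll (α β : ℂ) (a b : ℂ × ℂ) (y z : ℂ) : ℂ :=
  sLL a b 1 * y * z + sLL a b 2 * (y - z) - sLL a b 3

/-- `F₁(x,y,z;𝐚,𝐛) = (K(y,z)x − L(y,z))/(M(y,z)x + N(y,z))`. -/
noncomputable def F1ll (α β : ℂ) (a b : ℂ × ℂ) (x y z : ℂ) : ℂ :=
  (Kll α β a b y z * x - Lll α β a b y z) / (Mll α β a b y z * x + Nll α β a b y z)

/-- `F₂(x,y,z;𝐚,𝐛) = (K(y,z)x + L(y,z))/(−M(y,z)x + N(y,z))`. -/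
noncomputable def F2ll (α β : ℂ) (a b : ℂ × ℂ) (x y z : ℂ) : ℂ :=
  (Kll α β a b y z * x + Lll α β a b y z) / (-(Mll α β a b y z) * x + Nll α β a b y z)

/-- The discrete Landau–Lifshits Yang–Baxter map
`R_{(𝐚,𝐛)}((x,X),(y,Y)) = ((F₁(y,x,Y;𝐚,𝐛), Y), (x, F₂(X,x,Y;𝐚,𝐛)))`. -/
noncomputable def Rll (α β : ℂ) (a b : ℂ × ℂ) :
    (ℂ × ℂ) × (ℂ × ℂ) → (ℂ × ℂ) × (ℂ × ℂ) :=
  fun uv => ((F1ll α β a b uv.2.1 uv.1.1 uv.2.2, uv.2.2),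
             (uv.1.1, F2ll α β a b uv.1.2 uv.1.1 uv.2.2))

/-- The discrete Landau–Lifshits Yang–Baxter map is unitary:
`R_{(𝐛,𝐚)}((q,Q),(p,P)) = ((y,Y),(x,X))`. -/
theorem Rll_unitary (α β : ℂ) (a b : ℂ × ℂ)
    (ha : onW α β a) (hb : onW α β b)
    (ha0 : a.1 ≠ 0) (hb0 : b.1 ≠ 0) (hab : a.1 ≠ b.1)
    (x X y Y p P q Q : ℂ)
    (hp : p = F1ll α β a b y x Y) (hP : P = Y)
    (hq : q = x) (hQ : Q = F2ll α β a b X x Y)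
    (h1 : Mll α β a b x Y * y + Nll α β a b x Y ≠ 0)
    (h2 : -(Mll α β a b x Y) * X + Nll α β a b x Y ≠ 0)
    (h3 : Mll α β b a q P * p + Nll α β b a q P ≠ 0)
    (h4 : -(Mll α β b a q P) * Q + Nll α β b a q P ≠ 0) :
    Rll α β b a ((q, Q), (p, P)) = ((y, Y), (x, X)) := by
  rw [hq, hP] at h3 h4 ⊢
  have hd : a.1 - b.1 ≠ 0 := sub_ne_zero.mpr hab
  have hd' : b.1 - a.1 ≠ 0 := sub_ne_zero.mpr (Ne.symm hab)
  have hsym : ∀ m : ℕ, sLL b a m = sLL a b m := by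
    intro m; unfold sLL; ring
  have hdiff : diffLL α β b a x Y = diffLL α β a b x Y := by
    simp only [diffLL, hsym]
  have hLsym : Lll α β b a x Y = Lll α β a b x Y := by
    simp only [Lll, hsym]
  have hMsym : Mll α β b a x Y = Mll α β a b x Y := by
    simp only [Mll, hsym]
  have hsum : sumLL α β b a x Y = -sumLL α β a b x Y := by
    simp only [sumLL, hsym]
    field_simp
    ring
  have hKsym : Kll α β b a x Y = -Nll α β a b x Y := by
    rw [Kll, hsum, hdiff, Nll]; ring
  have hNsym : Nll α β b a x Y = -Kll α β a b x Y := by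
    rw [Nll, hsum, hdiff, Kll]; ring
  set K := Kll α β a b x Y
  set N := Nll α β a b x Y
  set M := Mll α β a b x Y
  set L := Lll α β a b x Y
  rw [hMsym, hNsym] at h3 h4
  have hp' : p * (M * y + N) = K * y - L := by
    rw [hp, F1ll]; exact div_mul_cancel₀ _ h1
  have hQ' : Q * (-M * X + N) = K * X + L := by
    rw [hQ, F2ll]; exact div_mul_cancel₀ _ h2
  have e1 : F1ll α β b a p x Y = y := by
    rw [F1ll, hKsym, hLsym, hMsym, hNsym, div_eq_iff h3]
    linear_combination -hp'
  have e2 : F2ll α β b a Q x Y = X := by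
    rw [F2ll, hKsym, hLsym, hMsym, hNsym]
    rw [show -(M) * Q + -K = -(M * Q + K) from by ring] at h4 ⊢
    rw [div_eq_iff h4]
    linear_combination -hQ'
  simp [Rll, e1, e2]
end
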